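/- For H_a as in the extended isotropic oscillator family, the function K_{a2} = p_x^2 + (k_1 x^2/2 + k_2/x^2)(p_z^2 + 2Z(z)) + t_1 x^2 + 2 t_2/x^2 Poisson-commutes with H_a = (1/2)(p_x^2 + p_y^2 + V_a p_z^2) + U_a + V_a Z(z), on the set x ≠ 0, y ≠ 0; moreover H_a = (1/2)(K_{a2} + K_{a3}) where K_{a3} = p_y^2 + (k_1 y^2/2 + k_3/y^2)(p_z^2 + 2Z(z)) + t_1 y^2 + 2 t_3/y^2. -/

import Mathlib

/-- Canonical Poisson bracket on phase space ℝ³ × ℝ³ with coordinates (x,y,z,pₓ,p_y,p_z). -/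
noncomputable def pb (F G : ℝ → ℝ → ℝ → ℝ → ℝ → ℝ → ℝ) (x y z px py pz : ℝ) : ℝ :=
    deriv (fun t => F t y z px py pz) x * deriv (fun t => G x y z t py pz) px
  + deriv (fun t => F x t z px py pz) y * deriv (fun t => G x y z px t pz) py
  + deriv (fun t => F x y t px py pz) z * deriv (fun t => G x y z px py t) pz
  - deriv (fun t => F x y z t py pz) px * deriv (fun t => G t y z px py pz) x
  - deriv (fun t => F x y z px t pz) py * deriv (fun t => G x t z px py pz) y
  - deriv (fun t => F x y z px py t) pz * deriv (fun t => G x y t px py pz) z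

noncomputable def Ha (k1 k2 k3 t1 t2 t3 : ℝ) (Z : ℝ → ℝ) :
    ℝ → ℝ → ℝ → ℝ → ℝ → ℝ → ℝ :=
  fun x y z px py pz =>
    (1/2) * (px^2 + py^2 + ((1/2)*k1*(x^2+y^2) + k2/x^2 + k3/y^2) * pz^2)
    + ((1/2)*t1*(x^2+y^2) + t2/x^2 + t3/y^2)
    + ((1/2)*k1*(x^2+y^2) + k2/x^2 + k3/y^2) * Z z

noncomputable def Ka2 (k1 k2 t1 t2 : ℝ) (Z : ℝ → ℝ) :
    ℝ → ℝ → ℝ → ℝ → ℝ → ℝ → ℝ :=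
  fun x _ z px _ pz =>
    px^2 + (k1*x^2/2 + k2/x^2) * (pz^2 + 2*Z z) + t1*x^2 + 2*t2/x^2

noncomputable def Ka3 (k1 k3 t1 t3 : ℝ) (Z : ℝ → ℝ) :
    ℝ → ℝ → ℝ → ℝ → ℝ → ℝ → ℝ :=
  fun _ y z _ py pz =>
    py^2 + (k1*y^2/2 + k3/y^2) * (pz^2 + 2*Z z) + t1*y^2 + 2*t3/y^2

/-- derivative of a*s^2 + b/s^2 + c at t ≠ 0 -/
lemma hd_aux (a b c : ℝ) {t : ℝ} (ht : t ≠ 0) :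
    HasDerivAt (fun s : ℝ => a*s^2 + b/s^2 + c) (2*a*t - 2*b/t^3) t := by
  have h1 : HasDerivAt (fun s : ℝ => a*s^2) (a * (2*t)) t := by
    simpa using ((hasDerivAt_pow 2 t).const_mul a)
  have h2 : HasDerivAt (fun s : ℝ => b/s^2)
      ((0 * t^2 - b * (2*t)) / (t^2)^2) t := by
    simpa using (show HasDerivAt (fun s : ℝ => b/s^2) _ t from
      (hasDerivAt_const t b).div (hasDerivAt_pow 2 t) (pow_ne_zero 2 ht))
  have : HasDerivAt (fun s : ℝ => a*s^2 + b/s^2 + c) _ t := (h1.add h2).add_const c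
  convert this using 1
  field_simp
  ring

/-- derivative of a*s^2 + c at any t -/
lemma hq_aux (a c : ℝ) (t : ℝ) :
    HasDerivAt (fun s : ℝ => a*s^2 + c) (2*a*t) t := by
  have h1 : HasDerivAt (fun s : ℝ => a*s^2) (a * (2*t)) t := by
    simpa using ((hasDerivAt_pow 2 t).const_mul a)
  simpa [mul_comm, mul_assoc, mul_left_comm] using h1.add_const c

set_option maxHeartbeats 2000000 in
theorem stmt_16 (k1 k2 k3 t1 t2 t3 : ℝ) (Z : ℝ → ℝ) (hZ : Differentiable ℝ Z)
    (x y z px py pz : ℝ) (hx : x ≠ 0) (hy : y ≠ 0) :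
    pb (Ha k1 k2 k3 t1 t2 t3 Z) (Ka2 k1 k2 t1 t2 Z) x y z px py pz = 0 ∧
    Ha k1 k2 k3 t1 t2 t3 Z x y z px py pz =
      (1/2) * (Ka2 k1 k2 t1 t2 Z x y z px py pz
             + Ka3 k1 k3 t1 t3 Z x y z px py pz) := by
  constructor
  · -- partial derivatives of Ha
    set A1 : ℝ := (1/2)*((1/2)*k1)*pz^2 + (1/2)*t1 + (1/2)*k1*(Z z) with hA1
    set B1 : ℝ := (1/2)*k2*pz^2 + t2 + k2*(Z z) with hB1
    set B2 : ℝ := (1/2)*k3*pz^2 + t3 + k3*(Z z) with hB2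
    set V : ℝ := (1/2)*k1*(x^2+y^2) + k2/x^2 + k3/y^2 with hV
    set W : ℝ := k1*x^2/2 + k2/x^2 with hW
    have hHx : deriv (fun t => Ha k1 k2 k3 t1 t2 t3 Z t y z px py pz) x
        = 2*A1*x - 2*B1/x^3 := by
      have he : (fun t => Ha k1 k2 k3 t1 t2 t3 Z t y z px py pz)
          = (fun t : ℝ => A1*t^2 + B1/t^2 +
              ((1/2)*(px^2 + py^2 + ((1/2)*k1*y^2 + k3/y^2)*pz^2)
               + ((1/2)*t1*y^2 + t3/y^2)
               + ((1/2)*k1*y^2 + k3/y^2)*Z z)) := by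
        funext t; simp only [Ha, hA1, hB1]; ring
      rw [he, (hd_aux _ _ _ hx).deriv]
    have hHy : deriv (fun t => Ha k1 k2 k3 t1 t2 t3 Z x t z px py pz) y
        = 2*A1*y - 2*B2/y^3 := by
      have he : (fun t => Ha k1 k2 k3 t1 t2 t3 Z x t z px py pz)
          = (fun t : ℝ => A1*t^2 + B2/t^2 +
              ((1/2)*(px^2 + py^2 + ((1/2)*k1*x^2 + k2/x^2)*pz^2)
               + ((1/2)*t1*x^2 + t2/x^2)
               + ((1/2)*k1*x^2 + k2/x^2)*Z z)) := by
        funext t; simp only [Ha, hA1, hB2]; ring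
      rw [he, (hd_aux _ _ _ hy).deriv]
    have hHz : deriv (fun t => Ha k1 k2 k3 t1 t2 t3 Z x y t px py pz) z
        = V * deriv Z z := by
      have h : HasDerivAt (fun t => Ha k1 k2 k3 t1 t2 t3 Z x y t px py pz)
          (V * deriv Z z) z := by
        have := ((hZ z).hasDerivAt.const_mul V).const_add
          ((1/2) * (px^2 + py^2 + V * pz^2) + ((1/2)*t1*(x^2+y^2) + t2/x^2 + t3/y^2))
        simpa [Ha, hV] using this
      exact h.deriv
    have hHpx : deriv (fun t => Ha k1 k2 k3 t1 t2 t3 Z x y z t py pz) px = px := by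
      have he : (fun t => Ha k1 k2 k3 t1 t2 t3 Z x y z t py pz)
          = (fun t : ℝ => (1/2)*t^2 +
              ((1/2)*(py^2 + V*pz^2) + ((1/2)*t1*(x^2+y^2) + t2/x^2 + t3/y^2) + V*Z z)) := by
        funext t; simp only [Ha, hV]; ring
      rw [he, (hq_aux _ _ px).deriv]; ring
    have hHpy : deriv (fun t => Ha k1 k2 k3 t1 t2 t3 Z x y z px t pz) py = py := by
      have he : (fun t => Ha k1 k2 k3 t1 t2 t3 Z x y z px t pz)
          = (fun t : ℝ => (1/2)*t^2 +
              ((1/2)*(px^2 + V*pz^2) + ((1/2)*t1*(x^2+y^2) + t2/x^2 + t3/y^2) + V*Z z)) := by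
        funext t; simp only [Ha, hV]; ring
      rw [he, (hq_aux _ _ py).deriv]; ring
    have hHpz : deriv (fun t => Ha k1 k2 k3 t1 t2 t3 Z x y z px py t) pz = V * pz := by
      have he : (fun t => Ha k1 k2 k3 t1 t2 t3 Z x y z px py t)
          = (fun t : ℝ => ((1/2)*V)*t^2 +
              ((1/2)*(px^2 + py^2) + ((1/2)*t1*(x^2+y^2) + t2/x^2 + t3/y^2) + V*Z z)) := by
        funext t; simp only [Ha, hV]; ring
      rw [he, (hq_aux _ _ pz).deriv]; ring
    -- partial derivatives of Ka2
    have hKx : deriv (fun t => Ka2 k1 k2 t1 t2 Z t y z px py pz) x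
        = 2*((k1/2)*(pz^2+2*Z z) + t1)*x - 2*(k2*(pz^2+2*Z z) + 2*t2)/x^3 := by
      have he : (fun t => Ka2 k1 k2 t1 t2 Z t y z px py pz)
          = (fun t : ℝ => ((k1/2)*(pz^2+2*Z z) + t1)*t^2
              + (k2*(pz^2+2*Z z) + 2*t2)/t^2 + px^2) := by
        funext t; simp only [Ka2]; ring
      rw [he, (hd_aux _ _ _ hx).deriv]
    have hKy : deriv (fun t => Ka2 k1 k2 t1 t2 Z x t z px py pz) y = 0 := by
      simp [Ka2]
    have hKz : deriv (fun t => Ka2 k1 k2 t1 t2 Z x y t px py pz) z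
        = W * (2 * deriv Z z) := by
      have h : HasDerivAt (fun t => Ka2 k1 k2 t1 t2 Z x y t px py pz)
          (W * (2 * deriv Z z)) z := by
        have := ((((hZ z).hasDerivAt.const_mul (2:ℝ)).const_add (pz^2)).const_mul W).const_add
          (px^2)
        have h2 : HasDerivAt (fun t : ℝ => px ^ 2 + W * (pz ^ 2 + 2 * Z t) + (t1 * x ^ 2 + 2 * t2 / x ^ 2))
            (W * (2 * deriv Z z)) z := (this.add_const (t1*x^2 + 2*t2/x^2))
        convert h2 using 2
        simp only [Ka2, hW]; ring
      exact h.deriv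
    have hKpx : deriv (fun t => Ka2 k1 k2 t1 t2 Z x y z t py pz) px = 2*px := by
      have he : (fun t => Ka2 k1 k2 t1 t2 Z x y z t py pz)
          = (fun t : ℝ => (1:ℝ)*t^2 + (W*(pz^2+2*Z z) + t1*x^2 + 2*t2/x^2)) := by
        funext t; simp only [Ka2, hW]; ring
      rw [he, (hq_aux _ _ px).deriv]; ring
    have hKpy : deriv (fun t => Ka2 k1 k2 t1 t2 Z x y z px t pz) py = 0 := by
      simp [Ka2]
    have hKpz : deriv (fun t => Ka2 k1 k2 t1 t2 Z x y z px py t) pz = 2*W*pz := by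
      have he : (fun t => Ka2 k1 k2 t1 t2 Z x y z px py t)
          = (fun t : ℝ => W*t^2 + (px^2 + W*(2*Z z) + t1*x^2 + 2*t2/x^2)) := by
        funext t; simp only [Ka2, hW]; ring
      rw [he, (hq_aux _ _ pz).deriv]
    rw [pb, hHx, hHy, hHz, hHpx, hHpy, hHpz, hKx, hKy, hKz, hKpx, hKpy, hKpz,
      hA1, hB1, hB2, hV, hW]
    set S := Z z
    set D := deriv Z z
    field_simp
    ring
  · simp only [Ha, Ka2, Ka3]
    field_simp
    ring
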